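/- Let H be a complex Hilbert space and A, B ∈ B(H) positive operators. If there exists a complex number λ such that √A ∘ √B = λ • (√B ∘ √A), then A∘B = B∘A. -/

import Mathlib

set_option synthInstance.maxHeartbeats 1000000
set_option maxHeartbeats 1000000

/-- If `A, B` are positive bounded operators on a complex Hilbert
space whose (unique) positive square roots `√A`, `√B` satisfy
`√A ∘ √B = λ • (√B ∘ √A)` for some `λ ∈ ℂ`, then `A∘B = B∘A`. -/
theorem sqrt_anyonic_comm_implies_bosonic_comm
    {H : Type*} [NormedAddCommGroup H] [InnerProductSpace ℂ H] [CompleteSpace H]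
    (A B : H →L[ℂ] H) (hA : A.IsPositive) (hB : B.IsPositive)
    (h : ∃ lam : ℂ, CFC.sqrt A ∘L CFC.sqrt B = lam • (CFC.sqrt B ∘L CFC.sqrt A)) :
    A ∘L B = B ∘L A := by
  obtain ⟨lam, h⟩ := h
  rcases subsingleton_or_nontrivial (H →L[ℂ] H) with hsub | hnt
  · exact Subsingleton.elim _ _
  have hA' : 0 ≤ A := (ContinuousLinearMap.nonneg_iff_isPositive A).mpr hA
  have hB' : 0 ≤ B := (ContinuousLinearMap.nonneg_iff_isPositive B).mpr hB
  set a := CFC.sqrt A with ha_def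
  set b := CFC.sqrt B with hb_def
  have ha : 0 ≤ a := CFC.sqrt_nonneg (a := A)
  have hb : 0 ≤ b := CFC.sqrt_nonneg (a := B)
  have hsa : IsSelfAdjoint a := .of_nonneg ha
  have hsb : IsSelfAdjoint b := .of_nonneg hb
  have hsA : IsSelfAdjoint A := .of_nonneg hA'
  have hsB : IsSelfAdjoint B := .of_nonneg hB'
  have hA2 : a * a = A := CFC.sqrt_mul_sqrt_self A hA'
  have hB2 : b * b = B := CFC.sqrt_mul_sqrt_self B hB'
  have h : a * b = lam • (b * a) := by
    simpa only [ContinuousLinearMap.mul_def] using h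
  show A * B = B * A
  have hba : b * a = (starRingEnd ℂ) lam • (a * b) := by
    have := congrArg star h
    rwa [star_mul, hsa.star_eq, hsb.star_eq, star_smul, star_mul,
      hsa.star_eq, hsb.star_eq] at this
  by_cases hab : a * b = 0
  · have hba0 : b * a = 0 := by rw [hba, hab, smul_zero]
    rw [← hA2, ← hB2, mul_assoc a a (b*b), ← mul_assoc a b b, hab,
      zero_mul, mul_zero, mul_assoc b b (a*a), ← mul_assoc b a a, hba0,
      zero_mul, mul_zero]
  -- λ * conj λ = 1
  have hone : lam * (starRingEnd ℂ) lam = 1 := by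
    have heq : (lam * (starRingEnd ℂ) lam) • (a * b) = (1 : ℂ) • (a * b) := by
      rw [one_smul, mul_smul, ← hba]; exact h.symm
    have h0 := sub_eq_zero.mpr heq
    rw [← sub_smul] at h0
    rcases smul_eq_zero.mp h0 with h1 | h1
    · exact sub_eq_zero.mp h1
    · exact absurd h1 hab
  have hlam0 : lam ≠ 0 := by
    intro h0; rw [h0, zero_mul] at hone; exact zero_ne_one hone
  set s : H →L[ℂ] H := (b * a) * (a * b) with hs_def
  have hs : 0 ≤ s := by
    have := star_mul_self_nonneg (a * b)
    rwa [star_mul, hsa.star_eq, hsb.star_eq] at this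
  have hss : IsSelfAdjoint s := .of_nonneg hs
  have hABs : A * B = (lam ^ 2) • s := by
    rw [← hA2, ← hB2]
    calc a * a * (b * b) = a * ((a * b) * b) := by rw [mul_assoc, mul_assoc]
      _ = a * ((lam • (b * a)) * b) := by rw [← h]
      _ = lam • (a * ((b * a) * b)) := by rw [smul_mul_assoc, mul_smul_comm]
      _ = lam • ((a * b) * (a * b)) := by rw [mul_assoc b a b, ← mul_assoc]
      _ = lam • ((lam • (b * a)) * (a * b)) := by rw [← h]
      _ = (lam ^ 2) • s := by rw [smul_mul_assoc, smul_smul, ← pow_two, hs_def]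
  have hBAs : B * A = (starRingEnd ℂ) (lam ^ 2) • s := by
    have := congrArg star hABs
    rwa [star_mul, hsA.star_eq, hsB.star_eq, star_smul, hss.star_eq] at this
  by_cases hs0 : s = 0
  · rw [hABs, hBAs, hs0, smul_zero, smul_zero]
  -- now show (lam ^ 2) is real, so that conj (lam^2) = lam^2
  have h2ne : lam ^ 2 ≠ 0 := pow_ne_zero 2 hlam0
  have hnorm : ‖s‖ ∈ spectrum ℝ s := CStarAlgebra.norm_mem_spectrum_of_nonneg hs
  have hnormC : (‖s‖ : ℂ) ∈ spectrum ℂ s := by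
    simpa using spectrum.algebraMap_mem ℂ hnorm
  have hmem : (lam ^ 2 * ‖s‖ : ℂ) ∈ spectrum ℂ (A * B) := by
    rw [hABs]
    have := (spectrum.smul_mem_smul_iff
      (a := s) (s := (‖s‖ : ℂ)) (r := Units.mk0 (lam ^ 2) h2ne)).mpr hnormC
    simpa [Units.smul_def, smul_eq_mul] using this
  -- swap spectrum: σ(A*B) \ {0} = σ((a*b)*(b*a)) \ {0}
  set p : H →L[ℂ] H := (a * b) * (b * a) with hp_def
  have hp : 0 ≤ p := by
    have := mul_star_self_nonneg (a * b)
    rwa [star_mul, hsa.star_eq, hsb.star_eq] at this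
  have hswap : spectrum ℂ (A * B) \ {0} = spectrum ℂ p \ {0} := by
    have h1 : A * B = a * ((a * b) * b) := by
      rw [← hA2, ← hB2, mul_assoc, mul_assoc]
    have h2 : ((a * b) * b) * a = p := by rw [hp_def, mul_assoc]
    rw [h1, ← h2]
    exact spectrum.nonzero_mul_comm _ _
  have hz_ne : (lam ^ 2 * ‖s‖ : ℂ) ≠ 0 := by
    have : (‖s‖ : ℂ) ≠ 0 := by
      exact_mod_cast (norm_pos_iff.mpr hs0).ne'
    exact mul_ne_zero h2ne this
  have hmem' : (lam ^ 2 * ‖s‖ : ℂ) ∈ spectrum ℂ p := by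
    have : (lam ^ 2 * ‖s‖ : ℂ) ∈ spectrum ℂ (A * B) \ {0} := ⟨hmem, hz_ne⟩
    rw [hswap] at this
    exact this.1
  have him0 : (lam ^ 2 * ‖s‖ : ℂ).im = 0 := by
    open ComplexOrder in
    exact (Complex.nonneg_iff.mp (spectrum_nonneg_of_nonneg hp hmem')).2.symm
  have him : (lam ^ 2).im = 0 := by
    rw [Complex.mul_im] at him0
    simp only [Complex.ofReal_re, Complex.ofReal_im, mul_zero, zero_add] at him0
    have hsnorm : ‖s‖ ≠ 0 := (norm_pos_iff.mpr hs0).ne'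
    exact (mul_eq_zero.mp him0).resolve_right hsnorm
  have hreal : (starRingEnd ℂ) (lam ^ 2) = lam ^ 2 := Complex.conj_eq_iff_im.mpr him
  rw [hABs, hBAs, hreal]
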